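/- In the fixed-point subalgebra L^ω of the sl₂-loop algebra under the Chevalley involution, the elements c_l = (t^l − t^{−l}) ⊗ h and b_m = t^m ⊗ e + t^{−m} ⊗ f satisfy [b_l, b_m] = c_{l−m}, [c_l, b_m] = 2(b_{m+l} − b_{m−l}), and [c_l, c_m] = 0, for all l ∈ ℕ and m ∈ ℤ (with the convention c_{−l} = −c_l, c_0 = 0). -/

import Mathlib

open LaurentPolynomial

/-- In the sl₂-loop algebra `L = sl₂ ⊗ k[t,t⁻¹]` (here axiomatized as the free
`k[t,t⁻¹]`-module on the standard basis `e, f, h` of `sl₂`, with `k[t,t⁻¹]`-bilinear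
bracket), the elements `c_l = (t^l - t^{-l}) ⊗ h` and `b_m = t^m ⊗ e + t^{-m} ⊗ f` satisfy
`[b_l, b_m] = c_{l-m}`, `[c_l, b_m] = 2(b_{m+l} - b_{m-l})` and `[c_l, c_m] = 0`
for all `l ∈ ℕ`, `m ∈ ℤ`. -/
theorem stmt_8 {k : Type*} [Field k] [CharZero k]
    {L : Type*} [LieRing L] [LieAlgebra k L]
    [Module (LaurentPolynomial k) L] [IsScalarTower k (LaurentPolynomial k) L]
    (e f h : L)
    (bas : Module.Basis (Fin 3) (LaurentPolynomial k) L)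
    (hbas : bas 0 = e ∧ bas 1 = f ∧ bas 2 = h)
    (hsmul : ∀ (p : LaurentPolynomial k) (x y : L), ⁅p • x, y⁆ = p • ⁅x, y⁆)
    (hef : ⁅e, f⁆ = h) (hhe : ⁅h, e⁆ = (2 : k) • e) (hhf : ⁅h, f⁆ = -((2 : k) • f)) :
    let c : ℤ → L := fun n => ((T n - T (-n) : LaurentPolynomial k)) • h
    let b : ℤ → L := fun m => (T m : LaurentPolynomial k) • e + (T (-m) : LaurentPolynomial k) • f
    ∀ (l : ℕ) (m : ℤ),
      ⁅b (l : ℤ), b m⁆ = c ((l : ℤ) - m) ∧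
      ⁅c (l : ℤ), b m⁆ = (2 : k) • (b (m + (l : ℤ)) - b (m - (l : ℤ))) ∧
      ⁅c (l : ℤ), c m⁆ = 0 := by
  intro c b l m
  have hsmul' : ∀ (p : LaurentPolynomial k) (x y : L), ⁅x, p • y⁆ = p • ⁅x, y⁆ := by
    intro p x y
    rw [← lie_skew, hsmul, ← lie_skew x y, smul_neg]
  have hfe : ⁅f, e⁆ = -h := by rw [← lie_skew, hef]
  have key : ∀ a b' : ℤ, ∀ x y : L,
      ⁅(T a : LaurentPolynomial k) • x, (T b' : LaurentPolynomial k) • y⁆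
        = (T (a + b') : LaurentPolynomial k) • ⁅x, y⁆ := by
    intro a b' x y
    rw [hsmul, hsmul', smul_smul, ← T_add]
  refine ⟨?_, ?_, ?_⟩
  · show ⁅(T (l:ℤ) : LaurentPolynomial k) • e + (T (-(l:ℤ)) : LaurentPolynomial k) • f,
        (T m : LaurentPolynomial k) • e + (T (-m) : LaurentPolynomial k) • f⁆
      = ((T ((l:ℤ) - m) - T (-((l:ℤ) - m)) : LaurentPolynomial k)) • h
    rw [lie_add, add_lie, add_lie, key, key, key, key, lie_self, lie_self, hef, hfe,
      smul_zero, smul_zero, zero_add, add_zero, smul_neg,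
      (by ring : -((l:ℤ) - m) = -(l:ℤ) + m), sub_smul]
    abel
  · show ⁅((T (l:ℤ) - T (-(l:ℤ)) : LaurentPolynomial k)) • h,
        (T m : LaurentPolynomial k) • e + (T (-m) : LaurentPolynomial k) • f⁆
      = (2 : k) • (((T (m + (l:ℤ)) : LaurentPolynomial k) • e
          + (T (-(m + (l:ℤ))) : LaurentPolynomial k) • f)
        - ((T (m - (l:ℤ)) : LaurentPolynomial k) • e
          + (T (-(m - (l:ℤ))) : LaurentPolynomial k) • f))
    rw [sub_smul, sub_lie, lie_add, lie_add, key, key, key, key, hhe, hhf]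
    simp only [smul_neg]
    rw [smul_comm (T ((l:ℤ) + m) : LaurentPolynomial k) (2:k) e,
        smul_comm (T ((l:ℤ) + -m) : LaurentPolynomial k) (2:k) f,
        smul_comm (T (-(l:ℤ) + m) : LaurentPolynomial k) (2:k) e,
        smul_comm (T (-(l:ℤ) + -m) : LaurentPolynomial k) (2:k) f]
    rw [← smul_neg (2:k), ← smul_neg (2:k), ← smul_add, ← smul_add, ← smul_sub]
    congr 1
    have e1 : (l:ℤ) + m = m + l := by ring
    have e2 : (l:ℤ) + -m = -(m - (l:ℤ)) := by ring
    have e3 : (-(l:ℤ)) + m = m - l := by ring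
    have e4 : (-(l:ℤ)) + -m = -(m + (l:ℤ)) := by ring
    rw [e1, e2, e3, e4]
    abel
  · show ⁅((T (l:ℤ) - T (-(l:ℤ)) : LaurentPolynomial k)) • h,
        ((T m - T (-m) : LaurentPolynomial k)) • h⁆ = 0
    rw [hsmul, hsmul', lie_self, smul_zero, smul_zero]
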